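/- Let Ω̃ ⊂ ℝⁿ be measurable, and let β : Ω̃ → ℝ be continuous with 0 < β* ≤ β(x) ≤ β^* < 1 for all x. Define the variable-order Gagliardo seminorm |u|²_{H^{β(·)}} = ∫_{Ω̃}∫_{Ω̃} (u(y)−u(x))²/|y−x|^{n+2β(x)} dy dx and the norm ‖u‖_{H^{β(·)}} = ‖u‖_{L²} + |u|_{H^{β(·)}}. Then there is a constant C = C(n, β*, β^*) ≥ 1 such that C^{−1} ‖u‖_{H^{β*}(Ω̃)} ≤ ‖u‖_{H^{β(·)}(Ω̃)} ≤ C ‖u‖_{H^{β^*}(Ω̃)} for every measurable u : Ω̃ → ℝ; in particular H^{β^*}(Ω̃) ⊂ H^{β(·)}(Ω̃) ⊂ H^{β*}(Ω̃). -/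

import Mathlib

open MeasureTheory Set
open scoped ENNReal
noncomputable section

abbrev Euc (n : ℕ) := EuclideanSpace ℝ (Fin n)

/-- Variable-order Gagliardo seminorm squared. -/
def gagVarSq (n : ℕ) (Ω : Set (Euc n)) (p : Euc n → ℝ) (u : Euc n → ℝ) : ℝ≥0∞ :=
  ∫⁻ x in Ω, ∫⁻ y in Ω,
    ENNReal.ofReal ((u y - u x) ^ 2 / dist y x ^ ((n : ℝ) + 2 * p x))

/-- Squared L² norm. -/
def l2Sq (n : ℕ) (Ω : Set (Euc n)) (u : Euc n → ℝ) : ℝ≥0∞ :=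
  ∫⁻ x in Ω, ENNReal.ofReal ((u x) ^ 2)

/-- The (variable-order) Sobolev norm ‖u‖ = ‖u‖_{L²} + |u|_{H^{p(·)}}. -/
def sobNorm (n : ℕ) (Ω : Set (Euc n)) (p : Euc n → ℝ) (u : Euc n → ℝ) : ℝ≥0∞ :=
  l2Sq n Ω u ^ (1/2 : ℝ) + gagVarSq n Ω p u ^ (1/2 : ℝ)

/-- Truncated kernel. -/
def Gker (r : ℝ) (d : ℝ) : ℝ := if 1 ≤ d then d ^ (-r) else 0

lemma Gker_nonneg (r d : ℝ) : 0 ≤ Gker r d := by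
  unfold Gker; split
  · positivity
  · exact le_refl _

lemma measurable_Gker (r : ℝ) : Measurable (Gker r) :=
  Measurable.ite measurableSet_Ici (measurable_id.pow measurable_const) measurable_const

def Iconst (n : ℕ) (r : ℝ) : ℝ≥0∞ := ∫⁻ z : Euc n, ENNReal.ofReal (Gker r ‖z‖)

lemma Iconst_lt_top (n : ℕ) (r : ℝ) (hr : (n : ℝ) < r) : Iconst n r < ⊤ := by
  have hr0 : 0 < r := lt_of_le_of_lt (Nat.cast_nonneg n) hr
  have hbd : ∀ z : Euc n, Gker r ‖z‖ ≤ 2 ^ r * (1 + ‖z‖) ^ (-r) := by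
    intro z
    unfold Gker
    split
    · rename_i h1
      have hz0 : (0:ℝ) < ‖z‖ := lt_of_lt_of_le one_pos h1
      have h2 : (1 + ‖z‖) ^ r ≤ 2 ^ r * ‖z‖ ^ r := by
        rw [← Real.mul_rpow (by norm_num) (le_of_lt hz0)]
        exact Real.rpow_le_rpow (by positivity) (by linarith) hr0.le
      rw [Real.rpow_neg hz0.le, Real.rpow_neg (by positivity)]
      rw [← div_le_iff₀' (by positivity)] at h2
      calc (‖z‖ ^ r)⁻¹ ≤ ((1 + ‖z‖) ^ r / 2 ^ r)⁻¹ := by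
            gcongr
        _ = 2 ^ r * ((1 + ‖z‖) ^ r)⁻¹ := by
            rw [inv_div]; ring
    · positivity
  have : Iconst n r ≤ ENNReal.ofReal (2 ^ r) * ∫⁻ z : Euc n, ENNReal.ofReal ((1 + ‖z‖) ^ (-r)) := by
    rw [← lintegral_const_mul _ (by
      have : Measurable fun z : Euc n => (1 + ‖z‖) ^ (-r) :=
        (measurable_const.add measurable_norm).pow measurable_const
      exact this.ennreal_ofReal)]
    apply lintegral_mono
    intro z
    simp only []
    rw [← ENNReal.ofReal_mul (by positivity)]
    exact ENNReal.ofReal_le_ofReal (hbd z)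
  refine lt_of_le_of_lt this (ENNReal.mul_lt_top ENNReal.ofReal_lt_top ?_)
  have hnr : (Module.finrank ℝ (Euc n) : ℝ) < r := by
    simpa using hr
  exact finite_integral_one_add_norm hnr

lemma pointwise_key {r e f a b d : ℝ} (hd : 0 ≤ d) (hr : 0 < r) (hre : r ≤ e) (hef : e ≤ f) :
    (b - a) ^ 2 / d ^ e ≤ (b - a) ^ 2 / d ^ f + (2 * a ^ 2 + 2 * b ^ 2) * Gker r d := by
  rcases eq_or_lt_of_le hd with hd0 | hd0
  · -- d = 0
    have he0 : e ≠ 0 := by linarith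
    rw [← hd0, Real.zero_rpow he0, div_zero]
    have := Gker_nonneg r 0
    have h2 : (0:ℝ) ≤ (b - a) ^ 2 / (0:ℝ) ^ f := by positivity
    nlinarith [sq_nonneg a, sq_nonneg b]
  rcases lt_or_ge d 1 with hd1 | hd1
  · -- 0 < d < 1 : Gker = 0, compare exponents
    have hG : Gker r d = 0 := by unfold Gker; rw [if_neg (not_le.mpr hd1)]
    rw [hG, mul_zero, add_zero]
    have hdf : d ^ f ≤ d ^ e := Real.rpow_le_rpow_of_exponent_ge hd0 hd1.le hef
    have hdfpos : 0 < d ^ f := Real.rpow_pos_of_pos hd0 f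
    gcongr

  · -- 1 ≤ d
    have hG : Gker r d = d ^ (-r) := by unfold Gker; rw [if_pos hd1]
    have h1 : (b - a) ^ 2 / d ^ e = (b - a) ^ 2 * d ^ (-e) := by
      rw [Real.rpow_neg hd, div_eq_mul_inv]
    have h2 : d ^ (-e) ≤ d ^ (-r) := Real.rpow_le_rpow_of_exponent_le hd1 (by linarith)
    have h3 : (b - a) ^ 2 ≤ 2 * a ^ 2 + 2 * b ^ 2 := by nlinarith [sq_nonneg (a + b)]
    have h4 : (b - a) ^ 2 * d ^ (-e) ≤ (2 * a ^ 2 + 2 * b ^ 2) * d ^ (-r) := by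
      apply mul_le_mul h3 h2 (by positivity) (by positivity)
    have h5 : 0 ≤ (b - a) ^ 2 / d ^ f := by positivity
    rw [h1, hG]
    linarith

set_option maxHeartbeats 1000000 in
lemma gag_compare (n : ℕ) (Ω : Set (Euc n)) (hΩ : MeasurableSet Ω) (βlo : ℝ) (hlo : 0 < βlo)
    (p q : Euc n → ℝ) (hq : Measurable q)
    (hp : ∀ x, βlo ≤ p x) (hpq : ∀ x, p x ≤ q x)
    (u : Euc n → ℝ) (hu : Measurable u) :
    gagVarSq n Ω p u ≤ gagVarSq n Ω q u +
      4 * Iconst n ((n : ℝ) + 2 * βlo) * l2Sq n Ω u := by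
  set r : ℝ := (n : ℝ) + 2 * βlo with hr_def
  have hr0 : 0 < r := by positivity
  have hGm : Measurable (Gker r) := measurable_Gker r
  -- measurability of pieces
  have hdm : Measurable fun z : Euc n × Euc n => dist z.2 z.1 :=
    (continuous_snd.dist continuous_fst).measurable
  have hA : Measurable fun z : Euc n × Euc n =>
      ENNReal.ofReal ((u z.2 - u z.1) ^ 2 / dist z.2 z.1 ^ ((n : ℝ) + 2 * q z.1)) := by
    apply Measurable.ennreal_ofReal
    exact (((hu.comp measurable_snd).sub (hu.comp measurable_fst)).pow measurable_const).div
      (hdm.pow ((measurable_const.add (measurable_const.mul (hq.comp measurable_fst)))))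
  have hB1 : Measurable fun z : Euc n × Euc n =>
      ENNReal.ofReal (2 * (u z.1) ^ 2 * Gker r (dist z.2 z.1)) := by
    apply Measurable.ennreal_ofReal
    exact ((measurable_const.mul ((hu.comp measurable_fst).pow measurable_const)).mul
      (hGm.comp hdm))
  have hB2 : Measurable fun z : Euc n × Euc n =>
      ENNReal.ofReal (2 * (u z.2) ^ 2 * Gker r (dist z.2 z.1)) := by
    apply Measurable.ennreal_ofReal
    exact ((measurable_const.mul ((hu.comp measurable_snd).pow measurable_const)).mul
      (hGm.comp hdm))
  -- pointwise bound
  have key : ∀ x y : Euc n,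
      ENNReal.ofReal ((u y - u x) ^ 2 / dist y x ^ ((n : ℝ) + 2 * p x)) ≤
      ENNReal.ofReal ((u y - u x) ^ 2 / dist y x ^ ((n : ℝ) + 2 * q x)) +
      (ENNReal.ofReal (2 * (u x) ^ 2 * Gker r (dist y x)) +
       ENNReal.ofReal (2 * (u y) ^ 2 * Gker r (dist y x))) := by
    intro x y
    have h := pointwise_key (r := r) (e := (n : ℝ) + 2 * p x) (f := (n : ℝ) + 2 * q x)
      (a := u x) (b := u y) (d := dist y x) dist_nonneg hr0
      (by have := hp x; simp only [hr_def]; linarith)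
      (by have := hpq x; linarith)
    have hGnn := Gker_nonneg r (dist y x)
    calc ENNReal.ofReal ((u y - u x) ^ 2 / dist y x ^ ((n : ℝ) + 2 * p x))
        ≤ ENNReal.ofReal ((u y - u x) ^ 2 / dist y x ^ ((n : ℝ) + 2 * q x) +
            (2 * (u x) ^ 2 + 2 * (u y) ^ 2) * Gker r (dist y x)) :=
          ENNReal.ofReal_le_ofReal h
      _ = _ := by
          rw [ENNReal.ofReal_add (by positivity) (by positivity)]
          congr 1
          rw [add_mul, ENNReal.ofReal_add (by positivity) (by positivity)]
  -- translation invariance bound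
  have htrans : ∀ x : Euc n,
      (∫⁻ y in Ω, ENNReal.ofReal (Gker r (dist y x))) ≤ Iconst n r := by
    intro x
    refine le_trans (setLIntegral_le_lintegral _ _) (le_of_eq ?_)
    have : ∀ y : Euc n, dist y x = ‖y - x‖ := fun y => dist_eq_norm y x
    simp_rw [this]
    exact lintegral_sub_right_eq_self (fun z => ENNReal.ofReal (Gker r ‖z‖)) x
  -- bound for the B1 double integral
  have hB1bound : (∫⁻ x in Ω, ∫⁻ y in Ω, ENNReal.ofReal (2 * (u x) ^ 2 * Gker r (dist y x)))
      ≤ Iconst n r * (2 * l2Sq n Ω u) := by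
    have step1 : ∀ x : Euc n, (∫⁻ y in Ω, ENNReal.ofReal (2 * (u x) ^ 2 * Gker r (dist y x)))
        ≤ ENNReal.ofReal (2 * (u x) ^ 2) * Iconst n r := by
      intro x
      have hm : Measurable fun y : Euc n => ENNReal.ofReal (Gker r (dist y x)) :=
        (hGm.comp (continuous_id.dist continuous_const).measurable).ennreal_ofReal
      calc (∫⁻ y in Ω, ENNReal.ofReal (2 * (u x) ^ 2 * Gker r (dist y x)))
          = ∫⁻ y in Ω, ENNReal.ofReal (2 * (u x) ^ 2) * ENNReal.ofReal (Gker r (dist y x)) := by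
            simp_rw [ENNReal.ofReal_mul (show (0:ℝ) ≤ 2 * (u x) ^ 2 by positivity)]
        _ = ENNReal.ofReal (2 * (u x) ^ 2) * ∫⁻ y in Ω, ENNReal.ofReal (Gker r (dist y x)) :=
            lintegral_const_mul _ hm
        _ ≤ ENNReal.ofReal (2 * (u x) ^ 2) * Iconst n r := mul_le_mul_right (htrans x) _
    calc (∫⁻ x in Ω, ∫⁻ y in Ω, ENNReal.ofReal (2 * (u x) ^ 2 * Gker r (dist y x)))
        ≤ ∫⁻ x in Ω, ENNReal.ofReal (2 * (u x) ^ 2) * Iconst n r := lintegral_mono step1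
      _ = (∫⁻ x in Ω, ENNReal.ofReal (2 * (u x) ^ 2)) * Iconst n r :=
          lintegral_mul_const _ ((measurable_const.mul (hu.pow measurable_const)).ennreal_ofReal)
      _ = Iconst n r * (2 * l2Sq n Ω u) := by
          rw [mul_comm]
          congr 1
          unfold l2Sq
          rw [← lintegral_const_mul _ ((hu.pow measurable_const).ennreal_ofReal)]
          congr 1
          funext x
          rw [ENNReal.ofReal_mul (by norm_num)]
          norm_num
  -- bound for the B2 double integral (by symmetry / Tonelli)
  have hB2bound : (∫⁻ x in Ω, ∫⁻ y in Ω, ENNReal.ofReal (2 * (u y) ^ 2 * Gker r (dist y x)))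
      ≤ Iconst n r * (2 * l2Sq n Ω u) := by
    have hswap : (∫⁻ x in Ω, ∫⁻ y in Ω, ENNReal.ofReal (2 * (u y) ^ 2 * Gker r (dist y x)))
        = ∫⁻ y in Ω, ∫⁻ x in Ω, ENNReal.ofReal (2 * (u y) ^ 2 * Gker r (dist y x)) :=
      lintegral_lintegral_swap hB2.aemeasurable
    rw [hswap]
    have step1 : ∀ y : Euc n, (∫⁻ x in Ω, ENNReal.ofReal (2 * (u y) ^ 2 * Gker r (dist y x)))
        ≤ ENNReal.ofReal (2 * (u y) ^ 2) * Iconst n r := by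
      intro y
      have hm : Measurable fun x : Euc n => ENNReal.ofReal (Gker r (dist y x)) :=
        (hGm.comp (continuous_const.dist continuous_id).measurable).ennreal_ofReal
      calc (∫⁻ x in Ω, ENNReal.ofReal (2 * (u y) ^ 2 * Gker r (dist y x)))
          = ∫⁻ x in Ω, ENNReal.ofReal (2 * (u y) ^ 2) * ENNReal.ofReal (Gker r (dist y x)) := by
            simp_rw [ENNReal.ofReal_mul (show (0:ℝ) ≤ 2 * (u y) ^ 2 by positivity)]
        _ = ENNReal.ofReal (2 * (u y) ^ 2) * ∫⁻ x in Ω, ENNReal.ofReal (Gker r (dist y x)) :=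
            lintegral_const_mul _ hm
        _ ≤ ENNReal.ofReal (2 * (u y) ^ 2) * Iconst n r := by
            apply mul_le_mul_right
            simp_rw [dist_comm y]
            exact htrans y
    calc (∫⁻ y in Ω, ∫⁻ x in Ω, ENNReal.ofReal (2 * (u y) ^ 2 * Gker r (dist y x)))
        ≤ ∫⁻ y in Ω, ENNReal.ofReal (2 * (u y) ^ 2) * Iconst n r := lintegral_mono step1
      _ = (∫⁻ y in Ω, ENNReal.ofReal (2 * (u y) ^ 2)) * Iconst n r :=
          lintegral_mul_const _ ((measurable_const.mul (hu.pow measurable_const)).ennreal_ofReal)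
      _ = Iconst n r * (2 * l2Sq n Ω u) := by
          rw [mul_comm]
          congr 1
          unfold l2Sq
          rw [← lintegral_const_mul _ ((hu.pow measurable_const).ennreal_ofReal)]
          congr 1
          funext x
          rw [ENNReal.ofReal_mul (by norm_num)]
          norm_num
  -- main chain
  have inner_eq : ∀ x : Euc n,
      (∫⁻ y in Ω, (ENNReal.ofReal ((u y - u x) ^ 2 / dist y x ^ ((n : ℝ) + 2 * q x)) +
        (ENNReal.ofReal (2 * (u x) ^ 2 * Gker r (dist y x)) +
         ENNReal.ofReal (2 * (u y) ^ 2 * Gker r (dist y x)))))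
      = (∫⁻ y in Ω, ENNReal.ofReal ((u y - u x) ^ 2 / dist y x ^ ((n : ℝ) + 2 * q x))) +
        ((∫⁻ y in Ω, ENNReal.ofReal (2 * (u x) ^ 2 * Gker r (dist y x))) +
         (∫⁻ y in Ω, ENNReal.ofReal (2 * (u y) ^ 2 * Gker r (dist y x)))) := by
    intro x
    have hAx : Measurable fun y : Euc n =>
        ENNReal.ofReal ((u y - u x) ^ 2 / dist y x ^ ((n : ℝ) + 2 * q x)) :=
      hA.comp measurable_prodMk_left
    have hB1x : Measurable fun y : Euc n =>
        ENNReal.ofReal (2 * (u x) ^ 2 * Gker r (dist y x)) :=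
      hB1.comp measurable_prodMk_left
    rw [lintegral_add_left hAx, lintegral_add_left hB1x]
  calc gagVarSq n Ω p u
      ≤ ∫⁻ x in Ω, (∫⁻ y in Ω,
          (ENNReal.ofReal ((u y - u x) ^ 2 / dist y x ^ ((n : ℝ) + 2 * q x)) +
          (ENNReal.ofReal (2 * (u x) ^ 2 * Gker r (dist y x)) +
           ENNReal.ofReal (2 * (u y) ^ 2 * Gker r (dist y x))))) :=
        lintegral_mono fun x => lintegral_mono fun y => key x y
    _ = gagVarSq n Ω q u +
        ((∫⁻ x in Ω, ∫⁻ y in Ω, ENNReal.ofReal (2 * (u x) ^ 2 * Gker r (dist y x))) +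
         (∫⁻ x in Ω, ∫⁻ y in Ω, ENNReal.ofReal (2 * (u y) ^ 2 * Gker r (dist y x)))) := by
        rw [lintegral_congr inner_eq]
        rw [lintegral_add_left (hA.lintegral_prod_right' (ν := volume.restrict Ω)),
          lintegral_add_left (hB1.lintegral_prod_right' (ν := volume.restrict Ω))]
        rfl
    _ ≤ gagVarSq n Ω q u + (Iconst n r * (2 * l2Sq n Ω u) + Iconst n r * (2 * l2Sq n Ω u)) :=
        add_le_add_right (add_le_add hB1bound hB2bound) _
    _ = gagVarSq n Ω q u + 4 * Iconst n r * l2Sq n Ω u := by ring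

theorem stmt_1 (n : ℕ) (Ω : Set (Euc n)) (hΩ : MeasurableSet Ω)
    (β : Euc n → ℝ) (βlo βhi : ℝ)
    (hlo : 0 < βlo) (hhi : βhi < 1) (hβcont : Continuous β)
    (hβ : ∀ x, βlo ≤ β x ∧ β x ≤ βhi) :
    ∃ C : ℝ≥0∞, 1 ≤ C ∧ C ≠ ⊤ ∧
      (∀ u : Euc n → ℝ, Measurable u →
        C⁻¹ * sobNorm n Ω (fun _ => βlo) u ≤ sobNorm n Ω β u ∧
        sobNorm n Ω β u ≤ C * sobNorm n Ω (fun _ => βhi) u) ∧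
      {u : Euc n → ℝ | Measurable u ∧ sobNorm n Ω (fun _ => βhi) u ≠ ⊤} ⊆
        {u : Euc n → ℝ | Measurable u ∧ sobNorm n Ω β u ≠ ⊤} ∧
      {u : Euc n → ℝ | Measurable u ∧ sobNorm n Ω β u ≠ ⊤} ⊆
        {u : Euc n → ℝ | Measurable u ∧ sobNorm n Ω (fun _ => βlo) u ≠ ⊤} := by
  set r : ℝ := (n : ℝ) + 2 * βlo with hr_def
  have hI : Iconst n r < ⊤ := Iconst_lt_top n r (by simp only [hr_def]; linarith)
  set K : ℝ≥0∞ := 4 * Iconst n r with hK_def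
  have hK : K ≠ ⊤ := ENNReal.mul_ne_top (by norm_num) hI.ne
  have hKrt : K ^ (1/2 : ℝ) ≠ ⊤ := ENNReal.rpow_ne_top_of_nonneg (by norm_num) hK
  set C : ℝ≥0∞ := 1 + K ^ (1/2 : ℝ) with hC_def
  have hC1 : 1 ≤ C := le_self_add
  have hCtop : C ≠ ⊤ := by
    rw [hC_def]
    exact ENNReal.add_ne_top.mpr ⟨ENNReal.one_ne_top, hKrt⟩
  have hC0 : C ≠ 0 := by
    intro h
    rw [h] at hC1
    exact (not_le.mpr zero_lt_one) hC1
  have main : ∀ (p q : Euc n → ℝ), Measurable q → (∀ x, βlo ≤ p x) → (∀ x, p x ≤ q x) →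
      ∀ u : Euc n → ℝ, Measurable u → sobNorm n Ω p u ≤ C * sobNorm n Ω q u := by
    intro p q hq hp hpq u hu
    have h1 : gagVarSq n Ω p u ≤ gagVarSq n Ω q u + K * l2Sq n Ω u := by
      have := gag_compare n Ω hΩ βlo hlo p q hq hp hpq u hu
      rw [hK_def, mul_assoc]
      rw [← hr_def] at this
      calc gagVarSq n Ω p u ≤ gagVarSq n Ω q u + 4 * Iconst n r * l2Sq n Ω u := this
        _ = gagVarSq n Ω q u + 4 * (Iconst n r * l2Sq n Ω u) := by ring
    have h2 : gagVarSq n Ω p u ^ (1/2 : ℝ) ≤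
        gagVarSq n Ω q u ^ (1/2 : ℝ) + K ^ (1/2 : ℝ) * l2Sq n Ω u ^ (1/2 : ℝ) := by
      calc gagVarSq n Ω p u ^ (1/2 : ℝ)
          ≤ (gagVarSq n Ω q u + K * l2Sq n Ω u) ^ (1/2 : ℝ) :=
            ENNReal.rpow_le_rpow h1 (by norm_num)
        _ ≤ gagVarSq n Ω q u ^ (1/2 : ℝ) + (K * l2Sq n Ω u) ^ (1/2 : ℝ) :=
            ENNReal.rpow_add_le_add_rpow _ _ (by norm_num) (by norm_num)
        _ = _ := by rw [ENNReal.mul_rpow_of_nonneg _ _ (by norm_num)]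
    unfold sobNorm
    calc l2Sq n Ω u ^ (1/2 : ℝ) + gagVarSq n Ω p u ^ (1/2 : ℝ)
        ≤ l2Sq n Ω u ^ (1/2 : ℝ) +
          (gagVarSq n Ω q u ^ (1/2 : ℝ) + K ^ (1/2 : ℝ) * l2Sq n Ω u ^ (1/2 : ℝ)) :=
          add_le_add_right h2 _
      _ = C * l2Sq n Ω u ^ (1/2 : ℝ) + gagVarSq n Ω q u ^ (1/2 : ℝ) := by
          rw [hC_def]; ring
      _ ≤ C * l2Sq n Ω u ^ (1/2 : ℝ) + C * gagVarSq n Ω q u ^ (1/2 : ℝ) :=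
          add_le_add_right (le_mul_of_one_le_left zero_le hC1) _
      _ = C * (l2Sq n Ω u ^ (1/2 : ℝ) + gagVarSq n Ω q u ^ (1/2 : ℝ)) := by rw [mul_add]
  have mainlo : ∀ u : Euc n → ℝ, Measurable u →
      sobNorm n Ω (fun _ => βlo) u ≤ C * sobNorm n Ω β u := fun u hu =>
    main (fun _ => βlo) β hβcont.measurable (fun _ => le_refl _) (fun x => (hβ x).1) u hu
  have mainhi : ∀ u : Euc n → ℝ, Measurable u →
      sobNorm n Ω β u ≤ C * sobNorm n Ω (fun _ => βhi) u := fun u hu =>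
    main β (fun _ => βhi) measurable_const (fun x => (hβ x).1) (fun x => (hβ x).2) u hu
  refine ⟨C, hC1, hCtop, ?_, ?_, ?_⟩
  · intro u hu
    refine ⟨?_, mainhi u hu⟩
    calc C⁻¹ * sobNorm n Ω (fun _ => βlo) u ≤ C⁻¹ * (C * sobNorm n Ω β u) :=
          mul_le_mul_right (mainlo u hu) _
      _ = sobNorm n Ω β u := by rw [← mul_assoc, ENNReal.inv_mul_cancel hC0 hCtop, one_mul]
  · rintro u ⟨hum, hfin⟩
    exact ⟨hum, ne_top_of_le_ne_top (ENNReal.mul_ne_top hCtop hfin) (mainhi u hum)⟩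
  · rintro u ⟨hum, hfin⟩
    exact ⟨hum, ne_top_of_le_ne_top (ENNReal.mul_ne_top hCtop hfin) (mainlo u hum)⟩
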